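/- Fix integers n_s, n_a ≥ 1 and a horizon K ≥ 1. Let A ⊆ ℝ^{n_a} be a nonempty compact convex action set, let c : ℝ^{n_s} × ℝ^{n_a} → ℝ be a continuous function that is jointly convex (the negative reward), let T : ℝ^{n_s} × ℝ^{n_a} → ℝ^{n_s} be an affine map (the deterministic state transition), and let γ ∈ [0,1] be a discount factor. Define the negative Q-functions by backward recursion: Q⁻_{K−1}(s,a) = c(s,a), and for 0 ≤ k < K−1, Q⁻_k(s,a) = c(s,a) + γ · min_{a′ ∈ A} Q⁻_{k+1}(T(s,a), a′). Then for every 0 ≤ k ≤ K−1, the minimum in the recursion is attained, and Q⁻_k is continuous and jointly convex on ℝ^{n_s} × ℝ^{n_a}. -/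

import Mathlib

/-- Partial minimization over a convex set preserves convexity, provided the
minimum is attained at every point. -/
lemma convexOn_partial_min {E F : Type*} [NormedAddCommGroup E] [NormedSpace ℝ E]
    [NormedAddCommGroup F] [NormedSpace ℝ F]
    (f : E × F → ℝ) (hf : ConvexOn ℝ Set.univ f)
    (A : Set F) (hA_conv : Convex ℝ A)
    (hmin : ∀ x : E, ∃ a ∈ A, ∀ b ∈ A, f (x, a) ≤ f (x, b)) :
    ConvexOn ℝ Set.univ (fun x => sInf ((fun a => f (x, a)) '' A)) := by
  have hleast : ∀ x : E, ∃ a ∈ A,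
      sInf ((fun a => f (x, a)) '' A) = f (x, a) := by
    intro x
    obtain ⟨a, ha, hamin⟩ := hmin x
    refine ⟨a, ha, IsLeast.csInf_eq ⟨⟨a, ha, rfl⟩, ?_⟩⟩
    rintro _ ⟨b, hb, rfl⟩
    exact hamin b hb
  refine ⟨convex_univ, ?_⟩
  intro x _ y _ p q hp hq hpq
  dsimp only
  obtain ⟨a, ha, hax⟩ := hleast x
  obtain ⟨b, hb, hby⟩ := hleast y
  obtain ⟨m, hm, hmz⟩ := hleast (p • x + q • y)
  rw [hax, hby, hmz]
  calc f (p • x + q • y, m) ≤ f (p • x + q • y, p • a + q • b) := by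
        obtain ⟨_, _, hmmin⟩ := hmin (p • x + q • y)
        have hbdd : BddBelow ((fun a => f (p • x + q • y, a)) '' A) := by
          obtain ⟨w, hw, hwmin⟩ := hmin (p • x + q • y)
          exact ⟨f (p • x + q • y, w), by rintro _ ⟨u, hu, rfl⟩; exact hwmin u hu⟩
        have : sInf ((fun a => f (p • x + q • y, a)) '' A)
            ≤ f (p • x + q • y, p • a + q • b) :=
          csInf_le hbdd ⟨p • a + q • b, hA_conv ha hb hp hq hpq, rfl⟩
        rwa [hmz] at this
    _ = f (p • (x, a) + q • (y, b)) := by rfl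
    _ ≤ p • f (x, a) + q • f (y, b) :=
        hf.2 (Set.mem_univ _) (Set.mem_univ _) hp hq hpq

/-- Convexity preservation along the Bellman backward recursion: for a
finite-horizon deterministic MDP with continuous jointly convex negative
reward `c`, affine state transition `T`, compact convex action set `A`, and
discount factor `γ ∈ [0,1]`, every negative Q-function `Q k` (for
`0 ≤ k ≤ K-1`) attains its minimum over actions, is continuous, and is
jointly convex in the state-action pair. -/
theorem negQ_backward_recursion_convex (ns na K : ℕ)
    (hns : 1 ≤ ns) (hna : 1 ≤ na) (hK : 1 ≤ K)
    (A : Set (EuclideanSpace ℝ (Fin na)))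
    (hA_ne : A.Nonempty) (hA_cpt : IsCompact A) (hA_conv : Convex ℝ A)
    (c : EuclideanSpace ℝ (Fin ns) × EuclideanSpace ℝ (Fin na) → ℝ)
    (hc_cont : Continuous c) (hc_conv : ConvexOn ℝ Set.univ c)
    (T : (EuclideanSpace ℝ (Fin ns) × EuclideanSpace ℝ (Fin na)) →ᵃ[ℝ]
      EuclideanSpace ℝ (Fin ns))
    (γ : ℝ) (hγ : γ ∈ Set.Icc (0 : ℝ) 1)
    (Q : ℕ → EuclideanSpace ℝ (Fin ns) × EuclideanSpace ℝ (Fin na) → ℝ)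
    (hQ_last : ∀ s a, Q (K - 1) (s, a) = c (s, a))
    (hQ_rec : ∀ k < K - 1, ∀ s a,
      Q k (s, a) = c (s, a) + γ * sInf ((fun a' => Q (k + 1) (T (s, a), a')) '' A)) :
    ∀ k ≤ K - 1,
      (∀ s : EuclideanSpace ℝ (Fin ns), ∃ a' ∈ A, ∀ b ∈ A, Q k (s, a') ≤ Q k (s, b)) ∧
      Continuous (Q k) ∧ ConvexOn ℝ Set.univ (Q k) := by
  -- convexity implies continuity (finite dimensions), continuity + compactness
  -- gives attainment of the minimum
  have himpl : ∀ k, ConvexOn ℝ Set.univ (Q k) →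
      (∀ s : EuclideanSpace ℝ (Fin ns), ∃ a' ∈ A, ∀ b ∈ A, Q k (s, a') ≤ Q k (s, b)) ∧
      Continuous (Q k) ∧ ConvexOn ℝ Set.univ (Q k) := by
    intro k hconv
    have hcont : Continuous (Q k) := by
      rw [← continuousOn_univ]
      exact hconv.continuousOn isOpen_univ
    refine ⟨?_, hcont, hconv⟩
    intro s
    obtain ⟨a, ha, hamin⟩ := hA_cpt.exists_isMinOn hA_ne
      ((hcont.comp (Continuous.prodMk_right s)).continuousOn)
    exact ⟨a, ha, fun b hb => hamin hb⟩
  -- main backward induction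
  have key : ∀ j k, k + j = K - 1 → ConvexOn ℝ Set.univ (Q k) := by
    intro j
    induction j with
    | zero =>
      intro k hk
      simp only [Nat.add_zero] at hk
      subst hk
      have : Q (K - 1) = c := by
        funext p
        obtain ⟨s, a⟩ := p
        exact hQ_last s a
      rw [this]; exact hc_conv
    | succ j ih =>
      intro k hk
      have hk1 : (k + 1) + j = K - 1 := by omega
      have hklt : k < K - 1 := by omega
      have hQ1 := ih (k + 1) hk1
      obtain ⟨hmin1, hcont1, -⟩ := himpl (k + 1) hQ1
      set g : EuclideanSpace ℝ (Fin ns) → ℝ :=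
        fun t => sInf ((fun a' => Q (k + 1) (t, a')) '' A) with hg
      have hg_conv : ConvexOn ℝ Set.univ g :=
        convexOn_partial_min (Q (k + 1)) hQ1 A hA_conv hmin1
      have heq : Q k = fun p => c p + γ * g (T p) := by
        funext p
        obtain ⟨s, a⟩ := p
        exact hQ_rec k hklt s a
      rw [heq]
      have hgT : ConvexOn ℝ Set.univ (g ∘ T) := by
        have := hg_conv.comp_affineMap T
        simpa using this
      have hsmul : ConvexOn ℝ Set.univ (γ • (g ∘ T)) := hgT.smul hγ.1
      have hfun : (fun p => c p + γ * g (T p)) = c + γ • (g ∘ T) := by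
        funext p
        simp [Pi.smul_apply, smul_eq_mul, Function.comp]
      rw [hfun]
      exact hc_conv.add hsmul
  intro k hk
  exact himpl k (key (K - 1 - k) k (by omega))
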